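/- The function s ↦ h₃(s) + 2^{s+1}·81^{-s}/(1 − 2·9^{-s}), where h₃ is entire, has pole set exactly {log_9 2 + 2πim/log 9 : m ∈ ℤ}; in particular this set is disjoint from {log_3 2 + 2πim/log 3 : m ∈ ℤ}. -/
import Mathlib

open Complex Filter Topology

private lemma slit9 : (9:ℂ) ∈ Complex.slitPlane := by
  rw [Complex.mem_slitPlane_iff]; left; norm_num

private lemma slit2 : (2:ℂ) ∈ Complex.slitPlane := by
  rw [Complex.mem_slitPlane_iff]; left; norm_num

private lemma slit81 : (81:ℂ) ∈ Complex.slitPlane := by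
  rw [Complex.mem_slitPlane_iff]; left; norm_num

private lemma hD_analytic (z : ℂ) :
    AnalyticAt ℂ (fun z : ℂ => 1 - 2 * (9:ℂ) ^ (-z)) z :=
  analyticAt_const.sub (analyticAt_const.mul
    (analyticAt_const.cpow analyticAt_id.neg slit9))

private lemma hN_analytic (z : ℂ) :
    AnalyticAt ℂ (fun z : ℂ => (2:ℂ) ^ (z + 1) * (81:ℂ) ^ (-z)) z :=
  (analyticAt_const.cpow (analyticAt_id.add analyticAt_const) slit2).mul
    (analyticAt_const.cpow analyticAt_id.neg slit81)

private lemma hN_ne (z : ℂ) : (2:ℂ) ^ (z + 1) * (81:ℂ) ^ (-z) ≠ 0 := by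
  apply mul_ne_zero <;>
  · rw [Ne, Complex.cpow_eq_zero_iff]
    rintro ⟨h, -⟩
    norm_num at h

private lemma Dzero_iff (s : ℂ) :
    1 - 2 * (9:ℂ) ^ (-s) = 0 ↔
      ∃ m : ℤ, s = Real.log 2 / Real.log 9
        + 2 * Real.pi * Complex.I * m / Real.log 9 := by
  have h9 : (9:ℂ) ≠ 0 := by norm_num
  have hl9 : Complex.log 9 = (Real.log 9 : ℂ) := by
    rw [show (9:ℂ) = ((9:ℝ):ℂ) by norm_num, Complex.ofReal_log (by norm_num : (0:ℝ) ≤ 9)]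
  have hL9 : (Real.log 9 : ℂ) ≠ 0 := by
    simp only [ne_eq, Complex.ofReal_eq_zero]
    exact (Real.log_pos (by norm_num)).ne'
  have hl2 : Complex.log 2 = (Real.log 2 : ℂ) := by
    rw [show (2:ℂ) = ((2:ℝ):ℂ) by norm_num, Complex.ofReal_log (by norm_num : (0:ℝ) ≤ 2)]
  have hL9' : Complex.log 9 ≠ 0 := by rw [hl9]; exact hL9
  have he2 : Complex.exp (-(Real.log 2 : ℂ)) = 1/2 := by
    rw [show -((Real.log 2 : ℝ):ℂ) = ((-Real.log 2 : ℝ):ℂ) by push_cast; ring,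
      ← Complex.ofReal_exp, Real.exp_neg, Real.exp_log (by norm_num : (0:ℝ) < 2)]
    norm_num
  rw [Complex.cpow_def_of_ne_zero h9, hl9]
  constructor
  · intro h0
    have hexp : Complex.exp ((Real.log 9 : ℂ) * (-s)) = Complex.exp (-(Real.log 2 : ℂ)) := by
      rw [he2]; linear_combination -h0/2
    obtain ⟨n, hn⟩ := Complex.exp_eq_exp_iff_exists_int.mp hexp
    refine ⟨-n, ?_⟩
    rw [Int.cast_neg, ← hl9, ← hl2] at *
    field_simp [hL9']
    linear_combination -hn
  · rintro ⟨m, rfl⟩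
    have : (Real.log 9 : ℂ) * (-(↑(Real.log 2) / ↑(Real.log 9)
        + 2 * ↑Real.pi * Complex.I * ↑m / ↑(Real.log 9)))
        = -(Real.log 2 : ℂ) + (-m : ℤ) * (2 * ↑Real.pi * Complex.I) := by
      rw [Int.cast_neg, ← hl9, ← hl2]
      field_simp [hL9']
      ring
    rw [this, Complex.exp_add, Complex.exp_int_mul_two_pi_mul_I, mul_one, he2]
    ring

private lemma re_aux (u v : ℝ) (m : ℤ) :
    ((u:ℂ)/(v:ℂ) + 2*(Real.pi:ℂ)*Complex.I*(m:ℂ)/(v:ℂ)).re = u/v := by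
  have : ((u:ℂ)/(v:ℂ) + 2*(Real.pi:ℂ)*Complex.I*(m:ℂ)/(v:ℂ))
      = ((u/v : ℝ):ℂ) + ((2*Real.pi*m/v : ℝ):ℂ)*Complex.I := by
    push_cast; ring
  rw [this]; simp

theorem topological_zeta_poles_omega3 (h₃ : ℂ → ℂ) (hh₃ : Differentiable ℂ h₃) :
    ({s : ℂ | ¬ AnalyticAt ℂ
        (fun z : ℂ => h₃ z + (2 : ℂ) ^ (z + 1) * (81 : ℂ) ^ (-z)
          / (1 - 2 * (9 : ℂ) ^ (-z))) s}
      = {s : ℂ | ∃ m : ℤ, s = Real.log 2 / Real.log 9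
          + 2 * Real.pi * Complex.I * m / Real.log 9}) ∧
    Disjoint
      {s : ℂ | ∃ m : ℤ, s = Real.log 2 / Real.log 9
          + 2 * Real.pi * Complex.I * m / Real.log 9}
      {s : ℂ | ∃ m : ℤ, s = Real.log 2 / Real.log 3
          + 2 * Real.pi * Complex.I * m / Real.log 3} := by
  constructor
  · ext s
    simp only [Set.mem_setOf_eq]
    rw [← Dzero_iff]
    constructor
    · intro hna
      by_contra hne
      exact hna ((hh₃.analyticAt s).add ((hN_analytic s).div (hD_analytic s) hne))
    · intro h0 hA
      have hg : AnalyticAt ℂ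
          (fun z : ℂ => (2:ℂ)^(z+1)*(81:ℂ)^(-z)/(1-2*(9:ℂ)^(-z))) s := by
        have h := hA.sub (hh₃.analyticAt s)
        have he : ((fun z : ℂ => h₃ z + (2:ℂ)^(z+1)*(81:ℂ)^(-z)/(1-2*(9:ℂ)^(-z))) - h₃)
            = fun z : ℂ => (2:ℂ)^(z+1)*(81:ℂ)^(-z)/(1-2*(9:ℂ)^(-z)) := by
          funext z; simp only [Pi.sub_apply]; ring
        rwa [he] at h
      rcases (hD_analytic s).eventually_eq_zero_or_eventually_ne_zero with hz | hz
      · have := AnalyticOnNhd.eqOn_zero_of_preconnected_of_eventuallyEq_zero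
          (U := Set.univ) (fun z _ => hD_analytic z) isPreconnected_univ
          (Set.mem_univ s) hz (Set.mem_univ 0)
        simp only [Pi.zero_apply, neg_zero, Complex.cpow_zero] at this
        norm_num at this
      · have heq : (fun z : ℂ => ((2:ℂ)^(z+1)*(81:ℂ)^(-z)/(1-2*(9:ℂ)^(-z)))
              * (1-2*(9:ℂ)^(-z)))
            =ᶠ[𝓝[≠] s] fun z : ℂ => (2:ℂ)^(z+1)*(81:ℂ)^(-z) :=
          hz.mono fun z h => div_mul_cancel₀ _ h
        have t1 : Filter.Tendsto
            (fun z : ℂ => ((2:ℂ)^(z+1)*(81:ℂ)^(-z)/(1-2*(9:ℂ)^(-z))) * (1-2*(9:ℂ)^(-z)))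
            (𝓝[≠] s)
            (𝓝 (((2:ℂ)^(s+1)*(81:ℂ)^(-s)/(1-2*(9:ℂ)^(-s))) * (1-2*(9:ℂ)^(-s)))) :=
          (hg.continuousAt.mul (hD_analytic s).continuousAt).continuousWithinAt
        have t2 : Filter.Tendsto (fun z : ℂ => (2:ℂ)^(z+1)*(81:ℂ)^(-z))
            (𝓝[≠] s) (𝓝 ((2:ℂ)^(s+1)*(81:ℂ)^(-s))) :=
          (hN_analytic s).continuousAt.continuousWithinAt
        have key := tendsto_nhds_unique (t1.congr' heq) t2
        rw [h0, mul_zero] at key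
        exact hN_ne s key.symm
  · rw [Set.disjoint_left]
    rintro s ⟨m, rfl⟩ ⟨k, hk⟩
    have hre := congrArg Complex.re hk
    rw [re_aux, re_aux] at hre
    have l3 : (0:ℝ) < Real.log 3 := Real.log_pos (by norm_num)
    have l2 : (0:ℝ) < Real.log 2 := Real.log_pos (by norm_num)
    have h9 : Real.log 9 = 2 * Real.log 3 := by
      rw [show (9:ℝ) = 3^2 by norm_num, Real.log_pow]; push_cast; ring
    rw [h9] at hre
    field_simp at hre
    nlinarith
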